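/- Let Ω be a semigroup and (𝒜, {η¹, η², …}) a Dend_∞-family algebra over a commutative ring k. For each k ≥ 1 and α₁,…,α_k ∈ Ω define μ^k_{α₁,…,α_k} := η^{k,[1]}_{α₁,…,α_k} + ⋯ + η^{k,[k]}_{α₁,…,α_k}. Then (𝒜, {μ¹, μ², …}) is an A_∞-algebra relative to Ω; that is, for every N ≥ 1, all homogeneous a₁,…,a_N ∈ 𝒜 and all α₁,…,α_N ∈ Ω: Σ_{m+n=N+1} Σ_{i=1}^m (−1)^{i(n+1)+n(|a₁|+⋯+|a_{i−1}|)} μ^m_{α₁,…,α_{i−1}, α_i⋯α_{i+n−1}, α_{i+n},…,α_N}(a₁,…,a_{i−1}, μ^n_{α_i,…,α_{i+n−1}}(a_i,…,a_{i+n−1}), a_{i+n},…,a_N) = 0. -/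

import Mathlib

namespace DendInfFamily

variable {k : Type*} [CommRing k] {Ω : Type*} [Semigroup Ω]
variable {𝒜 : ℤ → Type*} [∀ i, AddCommGroup (𝒜 i)] [∀ i, Module k (𝒜 i)]

/-- Homogeneous elements of the graded module `𝒜 = ⊕_{e ∈ ℤ} 𝒜 e`: pairs of a degree
and an element of that degree. -/
abbrev HElt (𝒜 : ℤ → Type*) : Type _ := Σ e : ℤ, 𝒜 e

/-- Projection of a homogeneous element onto the degree-`e` component (zero if the
degrees do not match). -/
def proj (e : ℤ) (x : HElt 𝒜) : 𝒜 e := if h : x.1 = e then h ▸ x.2 else 0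

/-- Multilinear-map data on the graded module `𝒜`, labelled by tuples of elements of
`Ω`: a map taking labels `α : ℕ → Ω`, degrees `d : ℕ → ℤ` and homogeneous arguments
`a s : 𝒜 (d s)` (positions are 1-based, only positions `1, …, k` are relevant for a
`k`-ary map) to a homogeneous element. -/
def FMap (Ω : Type*) (𝒜 : ℤ → Type*) : Type _ :=
  (ℕ → Ω) → (d : ℕ → ℤ) → ((s : ℕ) → 𝒜 (d s)) → HElt 𝒜

/-- The condition that a `kk`-ary map has degree `kk - 2`. -/
def DegCond (kk : ℕ) (η : FMap Ω 𝒜) : Prop :=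
  ∀ (α : ℕ → Ω) (d : ℕ → ℤ) (a : (s : ℕ) → 𝒜 (d s)),
    (η α d a).1 = (∑ s ∈ Finset.Icc 1 kk, d s) + kk - 2

/-- The ordered semigroup product `α a * α (a+1) * ⋯ * α (a+l)` of `l+1` factors. -/
def sprod (α : ℕ → Ω) (a : ℕ) : ℕ → Ω
  | 0 => α a
  | l + 1 => sprod α a l * α (a + l + 1)

/-- The label tuple `(α₁, …, α_{i−1}, α_i ⋯ α_{i+n−1}, α_{i+n}, …)` obtained from `α`
by contracting the `n` labels starting at position `i` to their product. -/
def ashiftΩ (n i : ℕ) (α : ℕ → Ω) : ℕ → Ω := fun s =>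
  if s < i then α s else if s = i then sprod α i (n - 1) else α (s + n - 1)

/-- The degree tuple `(d₁, …, d_{i−1}, e, d_{i+n}, …)` obtained from `d` by replacing
the `n` degrees starting at position `i` by the single degree `e`. -/
def dshift (n i : ℕ) (d : ℕ → ℤ) (e : ℤ) : ℕ → ℤ := fun s =>
  if s < i then d s else if s = i then e else d (s + n - 1)

/-- The argument tuple `(a₁, …, a_{i−1}, x, a_{i+n}, …)` obtained from `a` by replacing
the `n` arguments starting at position `i` by the homogeneous element `x`. -/
def ashift (n i : ℕ) {d : ℕ → ℤ} (a : (s : ℕ) → 𝒜 (d s)) (x : HElt 𝒜) :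
    (s : ℕ) → 𝒜 (dshift n i d x.1 s) := fun s =>
  if h1 : s < i then cast (congrArg 𝒜 (by simp [dshift, h1])) (a s)
  else if h2 : s = i then cast (congrArg 𝒜 (by simp [dshift, h1, h2])) x.2
  else cast (congrArg 𝒜 (by simp [dshift, h1, h2])) (a (s + n - 1))

/-- The composite term
`μout_{α₁,…,α_{i−1}, α_i⋯α_{i+n−1}, …}(a₁, …, a_{i−1}, μin_{α_i,…,α_{i+n−1}}(a_i, …, a_{i+n−1}), a_{i+n}, …)`. -/
def compTerm (μout μin : FMap Ω 𝒜) (n i : ℕ) (α : ℕ → Ω) (d : ℕ → ℤ)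
    (a : (s : ℕ) → 𝒜 (d s)) : HElt 𝒜 :=
  let x := μin (fun t => α (i - 1 + t)) (fun t => d (i - 1 + t)) (fun t => a (i - 1 + t))
  μout (ashiftΩ n i α) (dshift n i d x.1) (ashift n i a x)

/-- The sum `η^{[1]} + ⋯ + η^{[n]}` of the components of an `n`-ary family of maps,
as a single homogeneous-valued map (of degree `n − 2`). -/
def hsum (n : ℕ) (η : ℕ → FMap Ω 𝒜) : FMap Ω 𝒜 := fun α d a =>
  ⟨(∑ s ∈ Finset.Icc 1 n, d s) + n - 2,
    ∑ r ∈ Finset.Icc 1 n, proj ((∑ s ∈ Finset.Icc 1 n, d s) + n - 2) (η r α d a)⟩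

/-- The sign `(−1)^e` as an integer, for `e : ℤ`. -/
def esign (e : ℤ) : ℤ := (((-1 : ℤˣ) ^ e : ℤˣ) : ℤ)

/-- The combinatorial map `R₀(m; 1,…,n,…,1)` (with `n` at the `i`-th place):
`[r] ↦ [r]` if `r ≤ i−1`, `[r] ↦ [i]` if `i ≤ r ≤ i+n−1`, `[r] ↦ [r−n+1]` if `r ≥ i+n`. -/
def R0 (n i r : ℕ) : ℕ := if r < i then r else if r ≤ i + n - 1 then i else r - n + 1

/-- The inner map `η^{n, R_i(m;1,…,n,…,1)[r]}`: the single component `η^{n,[r−i+1]}`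
when `i ≤ r ≤ i+n−1`, and the formal sum `η^{n,[1]+⋯+[n]}` otherwise. -/
def innerD (n i r : ℕ) (η : ℕ → FMap Ω 𝒜) : FMap Ω 𝒜 :=
  if i ≤ r ∧ r ≤ i + n - 1 then η (r - i + 1) else hsum n η

end DendInfFamily
section DIFAux
set_option linter.unusedSectionVars false
open DendInfFamily
variable {k : Type*} [CommRing k] {Ω : Type*} [Semigroup Ω]
variable {𝒜 : ℤ → Type*} [∀ i, AddCommGroup (𝒜 i)] [∀ i, Module k (𝒜 i)]

lemma proj_mk (e : ℤ) (v : 𝒜 e) : proj e (⟨e, v⟩ : HElt 𝒜) = v := by simp [proj]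

lemma proj_ne {e : ℤ} {x : HElt 𝒜} (h : x.1 ≠ e) : proj e x = 0 := dif_neg h

lemma sigma_eq {e : ℤ} (x : HElt 𝒜) (h : x.1 = e) : x = ⟨e, proj e x⟩ := by
  obtain ⟨f, v⟩ := x
  dsimp at h
  subst h
  simp [proj]

lemma cast_sum {c e : ℤ} (h : c = e) {ι : Type*} (S : Finset ι) (f : ι → 𝒜 c) :
    cast (congrArg 𝒜 h) (∑ j ∈ S, f j) = ∑ j ∈ S, cast (congrArg 𝒜 h) (f j) := by
  subst h; simp

lemma proj_hsum (n : ℕ) (η : ℕ → FMap Ω 𝒜) (α : ℕ → Ω) (d : ℕ → ℤ)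
    (a : (s : ℕ) → 𝒜 (d s)) (e : ℤ)
    (h : ∀ r ∈ Finset.Icc 1 n, (η r α d a).1 = (∑ s ∈ Finset.Icc 1 n, d s) + n - 2) :
    proj e (hsum n η α d a) = ∑ r ∈ Finset.Icc 1 n, proj e (η r α d a) := by
  by_cases hD : (∑ s ∈ Finset.Icc 1 n, d s) + n - 2 = e
  · subst hD
    exact proj_mk _ _
  · rw [proj_ne (x := hsum n η α d a) hD]
    symm
    exact Finset.sum_eq_zero fun r hr => proj_ne (by rw [h r hr]; exact hD)

lemma ashift_update (n i : ℕ) {d : ℕ → ℤ} (a : (s : ℕ) → 𝒜 (d s)) (c : ℤ) (v w : 𝒜 c) :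
    (ashift n i a ⟨c, v⟩ : (s : ℕ) → 𝒜 (dshift n i d c s)) =
      Function.update (ashift n i a ⟨c, w⟩) i
        (cast (congrArg 𝒜 (show c = dshift n i d c i by simp [dshift])) v) := by
  funext s
  by_cases hs : s = i
  · subst hs
    rw [Function.update_self]
    simp [ashift]
  · rw [Function.update_of_ne hs]
    by_cases h1 : s < i <;> simp [ashift, h1, hs]



set_option linter.unusedSectionVars false

lemma key (η : ℕ → ℕ → FMap Ω 𝒜)
    (hdeg : ∀ kk r : ℕ, 1 ≤ r → r ≤ kk → DegCond kk (η kk r))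
    (hadd : ∀ kk r : ℕ, 1 ≤ r → r ≤ kk →
      ∀ (α : ℕ → Ω) (d : ℕ → ℤ) (a : (s : ℕ) → 𝒜 (d s)) (t : ℕ), 1 ≤ t → t ≤ kk →
      ∀ (x y : 𝒜 (d t)) (e : ℤ),
        proj e (η kk r α d (Function.update a t (x + y))) =
          proj e (η kk r α d (Function.update a t x)) +
            proj e (η kk r α d (Function.update a t y)))
    (N m i : ℕ) (hm1 : 1 ≤ m) (hmN : m ≤ N) (hi1 : 1 ≤ i) (him : i ≤ m)
    (α : ℕ → Ω) (d : ℕ → ℤ) (a : (s : ℕ) → 𝒜 (d s)) (E : ℤ) :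
    ∑ r ∈ Finset.Icc 1 N,
      proj E (compTerm (η m (R0 (N+1-m) i r)) (innerD (N+1-m) i r (η (N+1-m)))
        (N+1-m) i α d a)
      = proj E (compTerm (hsum m (η m)) (hsum (N+1-m) (η (N+1-m))) (N+1-m) i α d a) := by
  set n := N + 1 - m with hn
  have hn1 : 1 ≤ n := by omega
  have hmn : m + n = N + 1 := by omega
  clear_value n
  -- abbreviations
  set αin : ℕ → Ω := fun t => α (i - 1 + t) with hαin
  set din : ℕ → ℤ := fun t => d (i - 1 + t) with hdin
  set ain : (t : ℕ) → 𝒜 (din t) := fun t => a (i - 1 + t) with hain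
  set α' : ℕ → Ω := ashiftΩ n i α with hα'
  set x : HElt 𝒜 := hsum n (η n) αin din ain with hx
  -- the inner components
  set X : ℕ → HElt 𝒜 := fun σ => η n σ αin din ain with hX
  have hc : ∀ σ ∈ Finset.Icc 1 n, (X σ).1 = x.1 := by
    intro σ hσ
    rw [Finset.mem_Icc] at hσ
    exact hdeg n σ hσ.1 hσ.2 αin din ain
  -- T ρ : the outer components applied to the full inner sum
  set T : ℕ → 𝒜 E := fun ρ =>
    proj E (η m ρ α' (dshift n i d x.1) (ashift n i a x)) with hT
  -- the right-hand side
  have hRHS : proj E (compTerm (hsum m (η m)) (hsum n (η n)) n i α d a)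
      = ∑ ρ ∈ Finset.Icc 1 m, T ρ := by
    show proj E (hsum m (η m) α' (dshift n i d x.1) (ashift n i a x)) = _
    refine proj_hsum m (η m) α' _ _ E fun ρ hρ => ?_
    rw [Finset.mem_Icc] at hρ
    exact hdeg m ρ hρ.1 hρ.2 α' _ _
  rw [hRHS]
  -- the i-th term expands into the sum of inner components
  have hTi : T i = ∑ σ ∈ Finset.Icc 1 n,
      proj E (compTerm (η m i) (η n σ) n i α d a) := by
    have hxval : x = ⟨x.1, ∑ σ ∈ Finset.Icc 1 n, proj x.1 (X σ)⟩ := rfl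
    have hci : x.1 = dshift n i d x.1 i := by simp [dshift]
    -- F as an additive hom
    let b0 : (s : ℕ) → 𝒜 (dshift n i d x.1 s) := ashift n i a ⟨x.1, 0⟩
    let F : 𝒜 (dshift n i d x.1 i) →+ 𝒜 E := AddMonoidHom.mk'
      (fun v => proj E (η m i α' (dshift n i d x.1) (Function.update b0 i v)))
      (fun v w => hadd m i hi1 him α' _ b0 i hi1 him v w E)
    have hb : ∀ v : 𝒜 x.1,
        (ashift n i a ⟨x.1, v⟩ : (s : ℕ) → 𝒜 (dshift n i d x.1 s)) =
          Function.update b0 i (cast (congrArg 𝒜 hci) v) :=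
      fun v => ashift_update n i a x.1 v 0
    calc T i = F (cast (congrArg 𝒜 hci) (∑ σ ∈ Finset.Icc 1 n, proj x.1 (X σ))) := by
          rw [hT]
          show proj E (η m i α' (dshift n i d x.1) (ashift n i a x)) = _
          conv_lhs => rw [hxval, hb]
          rfl
      _ = ∑ σ ∈ Finset.Icc 1 n, F (cast (congrArg 𝒜 hci) (proj x.1 (X σ))) := by
          rw [cast_sum hci, map_sum]
      _ = ∑ σ ∈ Finset.Icc 1 n, proj E (compTerm (η m i) (η n σ) n i α d a) := by
          refine Finset.sum_congr rfl fun σ hσ => ?_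
          show proj E (η m i α' (dshift n i d x.1)
              (Function.update b0 i (cast (congrArg 𝒜 hci) (proj x.1 (X σ))))) = _
          rw [← hb]
          show proj E (η m i α' (dshift n i d (⟨x.1, proj x.1 (X σ)⟩ : HElt 𝒜).1)
              (ashift n i a ⟨x.1, proj x.1 (X σ)⟩)) = _
          rw [← sigma_eq (X σ) (hc σ hσ)]
          rfl
  -- split both sides into three pieces
  have splitL : ∀ f : ℕ → 𝒜 E, ∑ r ∈ Finset.Icc 1 N, f r
      = ((∑ r ∈ Finset.Icc 1 (i-1), f r) + ∑ r ∈ Finset.Icc i (i+n-1), f r)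
        + ∑ r ∈ Finset.Icc (i+n) N, f r := by
    intro f
    have h0 : Finset.Icc 1 N = Finset.Ioc 0 N := by rw [← Finset.Icc_add_one_left_eq_Ioc]; rfl
    have h1 : Finset.Icc 1 (i-1) = Finset.Ioc 0 (i-1) := by rw [← Finset.Icc_add_one_left_eq_Ioc]; rfl
    have h2 : Finset.Icc i (i+n-1) = Finset.Ioc (i-1) (i+n-1) := by
      rw [← Finset.Icc_add_one_left_eq_Ioc]; congr 1; omega
    have h3 : Finset.Icc (i+n) N = Finset.Ioc (i+n-1) N := by
      rw [← Finset.Icc_add_one_left_eq_Ioc]; congr 1; omega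
    rw [h0, h1, h2, h3,
      Finset.sum_Ioc_consecutive f (show (0:ℕ) ≤ i-1 by omega) (show i-1 ≤ i+n-1 by omega),
      Finset.sum_Ioc_consecutive f (show (0:ℕ) ≤ i+n-1 by omega) (show i+n-1 ≤ N by omega)]
  have splitR : ∑ ρ ∈ Finset.Icc 1 m, T ρ
      = ((∑ ρ ∈ Finset.Icc 1 (i-1), T ρ) + T i) + ∑ ρ ∈ Finset.Icc (i+1) m, T ρ := by
    have h1 : Finset.Icc 1 (i-1) = Finset.Ioc 0 (i-1) := by rw [← Finset.Icc_add_one_left_eq_Ioc]; rfl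
    have h2 : T i = ∑ ρ ∈ Finset.Ioc (i-1) i, T ρ := by
      have : Finset.Ioc (i-1) i = {i} := by
        ext t
        simp only [Finset.mem_Ioc, Finset.mem_singleton]
        omega
      rw [this, Finset.sum_singleton]
    have h3 : Finset.Icc (i+1) m = Finset.Ioc i m := Finset.Icc_add_one_left_eq_Ioc i m
    have h0 : Finset.Icc 1 m = Finset.Ioc 0 m := by rw [← Finset.Icc_add_one_left_eq_Ioc]; rfl
    rw [h0, h1, h2, h3,
      Finset.sum_Ioc_consecutive T (show (0:ℕ) ≤ i-1 by omega) (show i-1 ≤ i by omega),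
      Finset.sum_Ioc_consecutive T (show (0:ℕ) ≤ i by omega) (show i ≤ m by omega)]
  rw [splitL, splitR]
  congr 1
  · congr 1
    · -- left piece
      refine Finset.sum_congr rfl fun r hr => ?_
      rw [Finset.mem_Icc] at hr
      have h1 : R0 n i r = r := by unfold R0; rw [if_pos (by omega)]
      have h2 : innerD n i r (η n) = hsum n (η n) := by
        unfold innerD; rw [if_neg (by omega)]
      rw [h1, h2]
      rfl
    · -- middle piece
      rw [hTi]
      have hIm : Finset.Icc i (i+n-1)
          = Finset.map (addLeftEmbedding (i-1)) (Finset.Icc 1 n) := by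
        rw [Finset.map_add_left_Icc]; congr 1 <;> omega
      rw [hIm, Finset.sum_map]
      refine Finset.sum_congr rfl fun σ hσ => ?_
      rw [Finset.mem_Icc] at hσ
      simp only [addLeftEmbedding_apply]
      have h2 : innerD n i (i-1+σ) (η n) = η n σ := by
        unfold innerD
        rw [if_pos (show i ≤ i-1+σ ∧ i-1+σ ≤ i+n-1 by constructor <;> omega)]
        have hσe : i - 1 + σ - i + 1 = σ := by omega
        rw [hσe]
      have h1 : R0 n i (i-1+σ) = i := by
        unfold R0; rw [if_neg (by omega), if_pos (by omega)]
      rw [h1, h2]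
  · -- right piece
    have hIm : Finset.Icc (i+n) N
        = Finset.map (addLeftEmbedding (n-1)) (Finset.Icc (i+1) m) := by
      rw [Finset.map_add_left_Icc]; congr 1 <;> omega
    rw [hIm, Finset.sum_map]
    refine Finset.sum_congr rfl fun ρ hρ => ?_
    rw [Finset.mem_Icc] at hρ
    simp only [addLeftEmbedding_apply]
    have h1 : R0 n i (n-1+ρ) = ρ := by
      unfold R0; rw [if_neg (by omega), if_neg (by omega)]
      omega
    have h2 : innerD n i (n-1+ρ) (η n) = hsum n (η n) := by
      unfold innerD; rw [if_neg (by omega)]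
    rw [h1, h2]
    rfl

end DIFAux


open DendInfFamily in
/-- Let `Ω` be a semigroup and `(𝒜, {η¹, η², …})` a `Dend_∞`-family
algebra: each `η^k = (η^{k,[1]}, …, η^{k,[k]})` is a `k`-tuple of families of degree
`k−2` multilinear maps labelled by `Ω^k`, `η^{k,[r]}` not depending on the `r`-th label,
satisfying the `Dend_∞`-family identities.  Define
`μ^k := η^{k,[1]} + ⋯ + η^{k,[k]}`.  Then `(𝒜, {μ¹, μ², …})` is an `A_∞`-algebra
relative to `Ω`: each `μ^k` has degree `k−2` and for every `N ≥ 1`, all homogeneous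
arguments and all labels the `A_∞`-identity relative to `Ω` holds. -/
theorem dendInfFamily_gives_AInfRelative
    (k : Type*) [CommRing k] [CharZero k] (Ω : Type*) [Semigroup Ω]
    (𝒜 : ℤ → Type*) [∀ i, AddCommGroup (𝒜 i)] [∀ i, Module k (𝒜 i)]
    (η : ℕ → ℕ → FMap Ω 𝒜)
    -- each `η^{k,[r]}` has degree `k − 2`
    (hdeg : ∀ kk r : ℕ, 1 ≤ r → r ≤ kk → DegCond kk (η kk r))
    -- each `η^{k,[r]}` is multilinear: additive and `k`-homogeneous in every slot
    (hadd : ∀ kk r : ℕ, 1 ≤ r → r ≤ kk →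
      ∀ (α : ℕ → Ω) (d : ℕ → ℤ) (a : (s : ℕ) → 𝒜 (d s)) (t : ℕ), 1 ≤ t → t ≤ kk →
      ∀ (x y : 𝒜 (d t)) (e : ℤ),
        proj e (η kk r α d (Function.update a t (x + y))) =
          proj e (η kk r α d (Function.update a t x)) +
            proj e (η kk r α d (Function.update a t y)))
    (hsmul : ∀ kk r : ℕ, 1 ≤ r → r ≤ kk →
      ∀ (α : ℕ → Ω) (d : ℕ → ℤ) (a : (s : ℕ) → 𝒜 (d s)) (t : ℕ), 1 ≤ t → t ≤ kk →
      ∀ (c : k) (x : 𝒜 (d t)) (e : ℤ),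
        proj e (η kk r α d (Function.update a t (c • x))) =
          c • proj e (η kk r α d (Function.update a t x)))
    -- `η^{k,[r]}` does not depend on the label `α_r`
    (hfam : ∀ kk r : ℕ, 1 ≤ r → r ≤ kk →
      ∀ (α α' : ℕ → Ω) (d : ℕ → ℤ) (a : (s : ℕ) → 𝒜 (d s)),
        (∀ s : ℕ, s ≠ r → α s = α' s) → η kk r α d a = η kk r α' d a)
    -- the `Dend_∞`-family identities
    (hdend : ∀ N : ℕ, 1 ≤ N → ∀ r ∈ Finset.Icc 1 N,
      ∀ (α : ℕ → Ω) (d : ℕ → ℤ) (a : (s : ℕ) → 𝒜 (d s)),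
        ∑ m ∈ Finset.Icc 1 N, ∑ i ∈ Finset.Icc 1 m,
          esign (((i * (N + 2 - m) : ℕ) : ℤ) +
              ((N + 1 - m : ℕ) : ℤ) * ∑ s ∈ Finset.Icc 1 (i - 1), d s) •
            proj ((∑ s ∈ Finset.Icc 1 N, d s) + N - 3)
              (compTerm (η m (R0 (N + 1 - m) i r)) (innerD (N + 1 - m) i r (η (N + 1 - m)))
                (N + 1 - m) i α d a) = 0) :
    -- conclusion: `μ^k = η^{k,[1]} + ⋯ + η^{k,[k]}` has degree `k − 2` and satisfies
    -- the `A_∞`-identities relative to `Ω`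
    (∀ kk : ℕ, 1 ≤ kk → DegCond kk (hsum kk (η kk))) ∧
    (∀ N : ℕ, 1 ≤ N →
      ∀ (α : ℕ → Ω) (d : ℕ → ℤ) (a : (s : ℕ) → 𝒜 (d s)),
        ∑ m ∈ Finset.Icc 1 N, ∑ i ∈ Finset.Icc 1 m,
          esign (((i * (N + 2 - m) : ℕ) : ℤ) +
              ((N + 1 - m : ℕ) : ℤ) * ∑ s ∈ Finset.Icc 1 (i - 1), d s) •
            proj ((∑ s ∈ Finset.Icc 1 N, d s) + N - 3)
              (compTerm (hsum m (η m)) (hsum (N + 1 - m) (η (N + 1 - m)))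
                (N + 1 - m) i α d a) = 0) := by
  constructor
  · exact fun kk _ α d a => rfl
  · intro N hN α d a
    calc ∑ m ∈ Finset.Icc 1 N, ∑ i ∈ Finset.Icc 1 m,
          esign (((i * (N + 2 - m) : ℕ) : ℤ) +
              ((N + 1 - m : ℕ) : ℤ) * ∑ s ∈ Finset.Icc 1 (i - 1), d s) •
            proj ((∑ s ∈ Finset.Icc 1 N, d s) + N - 3)
              (compTerm (hsum m (η m)) (hsum (N + 1 - m) (η (N + 1 - m)))
                (N + 1 - m) i α d a)
        = ∑ m ∈ Finset.Icc 1 N, ∑ i ∈ Finset.Icc 1 m, ∑ r ∈ Finset.Icc 1 N,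
          esign (((i * (N + 2 - m) : ℕ) : ℤ) +
              ((N + 1 - m : ℕ) : ℤ) * ∑ s ∈ Finset.Icc 1 (i - 1), d s) •
            proj ((∑ s ∈ Finset.Icc 1 N, d s) + N - 3)
              (compTerm (η m (R0 (N + 1 - m) i r)) (innerD (N + 1 - m) i r (η (N + 1 - m)))
                (N + 1 - m) i α d a) := by
          refine Finset.sum_congr rfl fun m hm => Finset.sum_congr rfl fun i hi => ?_
          rw [Finset.mem_Icc] at hm hi
          rw [← key η hdeg hadd N m i hm.1 hm.2 hi.1 hi.2 α d a
              ((∑ s ∈ Finset.Icc 1 N, d s) + N - 3), Finset.smul_sum]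
      _ = ∑ r ∈ Finset.Icc 1 N, ∑ m ∈ Finset.Icc 1 N, ∑ i ∈ Finset.Icc 1 m,
          esign (((i * (N + 2 - m) : ℕ) : ℤ) +
              ((N + 1 - m : ℕ) : ℤ) * ∑ s ∈ Finset.Icc 1 (i - 1), d s) •
            proj ((∑ s ∈ Finset.Icc 1 N, d s) + N - 3)
              (compTerm (η m (R0 (N + 1 - m) i r)) (innerD (N + 1 - m) i r (η (N + 1 - m)))
                (N + 1 - m) i α d a) := by
          rw [← Finset.sum_comm]
          exact Finset.sum_congr rfl fun m _ => Finset.sum_comm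
      _ = 0 := Finset.sum_eq_zero fun r hr => hdend N hN r hr α d a
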